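/- Let A have at least two letters and L be a left ideal of A* (A*L ⊆ L). Then τ_L is a right congruence on A^{-ω} if and only if L is a two-sided ideal of A*, if and only if the set of suffix-minimal elements of L is a (right) semaphore code. -/
import Mathlib


/- Left infinite words over A are modelled as functions ℕ → A, where index 0 is
   the rightmost letter.  Appending a finite word on the right: -/

def lapp {A : Type*} (x : ℕ → A) (u : List A) : ℕ → A := fun n =>
  if h : n < u.length then u.reverse[n]'(by simpa using h) else x (n - u.length)

/-- u ∈ A* is a suffix of the left infinite word x -/
def IsLSuffix {A : Type*} (u : List A) (x : ℕ → A) : Prop := ∃ y : ℕ → A, x = lapp y u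

/-- right congruence on A^{-ω}: an equivalence relation compatible with the
  right action of A* (equivalently, with appending each letter) -/
def IsRightCongruence {A : Type*} (ρ : (ℕ → A) → (ℕ → A) → Prop) : Prop :=
  Equivalence ρ ∧ ∀ x y : ℕ → A, ∀ a : A, ρ x y → ρ (lapp x [a]) (lapp y [a])

section Graphs

variable {A Q : Type*}

/-- a left infinite path labelled x ending at q, in the A-graph with edge
  relation E (E p a q : there is an edge from p to q labelled a) -/
def HasLInfPath (E : Q → A → Q → Prop) (x : ℕ → A) (q : Q) : Prop :=
  ∃ f : ℕ → Q, f 0 = q ∧ ∀ n : ℕ, E (f (n + 1)) (x n) (f n)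

def OmegaDeterministic (E : Q → A → Q → Prop) : Prop :=
  ∀ x : ℕ → A, ∀ q q' : Q, HasLInfPath E x q → HasLInfPath E x q' → q = q'

def OmegaComplete (E : Q → A → Q → Prop) : Prop :=
  ∀ x : ℕ → A, ∃ q : Q, HasLInfPath E x q

def OmegaTrim (E : Q → A → Q → Prop) : Prop :=
  ∀ q : Q, ∃ x : ℕ → A, HasLInfPath E x q

/-- (-ω)-reset graph -/
def OmegaReset (E : Q → A → Q → Prop) : Prop :=
  OmegaDeterministic E ∧ OmegaComplete E ∧ OmegaTrim E

/-- finite paths: HasPath E q u q' means u labels a path from q to q' -/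
def HasPath (E : Q → A → Q → Prop) : Q → List A → Q → Prop
  | q, [], q' => q = q'
  | q, a :: u, q' => ∃ p : Q, E q a p ∧ HasPath E p u q'

end Graphs

/-- the setoid on A^{-ω} given by a right congruence -/
def caySetoid {A : Type*} {ρ : (ℕ → A) → (ℕ → A) → Prop} (hρ : IsRightCongruence ρ) :
    Setoid (ℕ → A) := ⟨ρ, hρ.1⟩

/-- the edge relation of the Cayley graph Cay(ρ): edges (uρ, a, (ua)ρ) -/
def cayE {A : Type*} {ρ : (ℕ → A) → (ℕ → A) → Prop} (hρ : IsRightCongruence ρ) :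
    Quotient (caySetoid hρ) → A → Quotient (caySetoid hρ) → Prop :=
  fun c a c' => ∃ u : ℕ → A, c = Quotient.mk (caySetoid hρ) u ∧
    c' = Quotient.mk (caySetoid hρ) (lapp u [a])

/-- the relation τ_P: x τ_P y iff x = y or some u ∈ P is a common suffix of x and y -/
def relTau {A : Type*} (P : Set (List A)) : (ℕ → A) → (ℕ → A) → Prop :=
  fun x y => x = y ∨ ∃ u ∈ P, IsLSuffix u x ∧ IsLSuffix u y

/-- the suffix-minimal elements of L ⊆ A* (denoted Lβ_ℓ) -/
def minSuffix {A : Type*} (L : Set (List A)) : Set (List A) :=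
  {u | u ∈ L ∧ ∀ v ∈ L, v <:+ u → v = u}

/-- suffix code: an antichain for the suffix order -/
def IsSuffixCode {A : Type*} (S : Set (List A)) : Prop :=
  ∀ u ∈ S, ∀ v ∈ S, u <:+ v → u = v

section Aux

variable {A : Type*}

lemma isLSuffix_iff {u : List A} {x : ℕ → A} :
    IsLSuffix u x ↔ ∀ n, ∀ h : n < u.length, x n = u.reverse[n]'(by simpa using h) := by
  constructor
  · rintro ⟨y, rfl⟩ n h
    simp [lapp, h]
  · intro h
    refine ⟨fun n => x (n + u.length), funext fun n => ?_⟩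
    unfold lapp
    split
    · exact h n ‹_›
    · congr 1; omega

lemma lapp_append (x : ℕ → A) (u w : List A) :
    lapp x (u ++ w) = lapp (lapp x u) w := by
  funext n
  simp only [lapp, List.reverse_append, List.length_append]
  rcases lt_or_ge n w.length with h1 | h1
  · rw [dif_pos (by omega), dif_pos h1]
    rw [List.getElem_append_left (by simpa using h1)]
  · rcases lt_or_ge n (u.length + w.length) with h2 | h2
    · rw [dif_pos (by omega), dif_neg (by omega), dif_pos (by omega)]
      rw [List.getElem_append_right (by simpa using h1)]
      congr 1
      simp
    · rw [dif_neg (by omega), dif_neg (by omega), dif_neg (by omega)]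
      congr 1
      omega

lemma isLSuffix_of_suffix {u v : List A} {x : ℕ → A} (hs : u <:+ v)
    (hv : IsLSuffix v x) : IsLSuffix u x := by
  obtain ⟨t, rfl⟩ := hs
  obtain ⟨y, rfl⟩ := hv
  exact ⟨lapp y t, (lapp_append y t u).symm ▸ rfl⟩

lemma isLSuffix_lapp (x : ℕ → A) (u : List A) : IsLSuffix u (lapp x u) := ⟨x, rfl⟩

lemma suffix_of_isLSuffix {u v : List A} {x : ℕ → A} (hu : IsLSuffix u x)
    (hv : IsLSuffix v x) (hlen : u.length ≤ v.length) : u <:+ v := by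
  rw [← List.reverse_prefix]
  have hu' := isLSuffix_iff.mp hu
  have hv' := isLSuffix_iff.mp hv
  have : u.reverse = v.reverse.take u.reverse.length := by
    apply List.ext_getElem
    · simp; omega
    · intro n h1 h2
      rw [List.getElem_take]
      have hn : n < u.length := by simpa using h1
      rw [← hu' n hn, hv' n (by omega)]
  rw [this]
  exact List.take_prefix _ _

lemma lapp_ge (x : ℕ → A) (u : List A) (k : ℕ) : lapp x u (u.length + k) = x k := by
  simp only [lapp]
  rw [dif_neg (by omega)]
  congr 1
  omega

lemma lapp_at_len (x : ℕ → A) (u : List A) : lapp x u u.length = x 0 := by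
  have := lapp_ge x u 0
  simpa using this

lemma relTau_equivalence (L : Set (List A)) : Equivalence (relTau L) where
  refl x := Or.inl rfl
  symm := by
    rintro x y (rfl | ⟨u, hu, hx, hy⟩)
    · exact Or.inl rfl
    · exact Or.inr ⟨u, hu, hy, hx⟩
  trans := by
    rintro x y z (rfl | ⟨u, hu, hx, hy⟩) hyz
    · exact hyz
    · rcases hyz with rfl | ⟨v, hv, hy', hz⟩
      · exact Or.inr ⟨u, hu, hx, hy⟩
      · rcases le_total u.length v.length with hle | hle
        · have : u <:+ v := suffix_of_isLSuffix hy hy' hle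
          exact Or.inr ⟨u, hu, hx, isLSuffix_of_suffix this hz⟩
        · have : v <:+ u := suffix_of_isLSuffix hy' hy hle
          exact Or.inr ⟨v, hv, isLSuffix_of_suffix this hx, hz⟩

lemma exists_minSuffix_aux (L : Set (List A)) :
    ∀ n : ℕ, ∀ u ∈ L, u.length ≤ n → ∃ s ∈ minSuffix L, s <:+ u := by
  intro n
  induction n with
  | zero =>
    intro u hu hlen
    refine ⟨u, ⟨hu, fun v hv hs => ?_⟩, List.suffix_rfl⟩
    have := hs.length_le
    exact hs.eq_of_length (by omega)
  | succ n ih =>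
    intro u hu hlen
    by_cases h : ∀ v ∈ L, v <:+ u → v = u
    · exact ⟨u, ⟨hu, h⟩, List.suffix_rfl⟩
    · push_neg at h
      obtain ⟨v, hv, hsuf, hne⟩ := h
      have hlt : v.length < u.length :=
        lt_of_le_of_ne hsuf.length_le fun e => hne (hsuf.eq_of_length e)
      obtain ⟨s, hs, hss⟩ := ih v hv (by omega)
      exact ⟨s, hs, hss.trans hsuf⟩

lemma exists_minSuffix {L : Set (List A)} {u : List A} (hu : u ∈ L) :
    ∃ s ∈ minSuffix L, s <:+ u :=
  exists_minSuffix_aux L u.length u hu le_rfl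

/-- one-step right closure implies full right closure -/
lemma step_imp_twoSided {L : Set (List A)}
    (h : ∀ u ∈ L, ∀ a : A, u ++ [a] ∈ L) :
    ∀ u ∈ L, ∀ v : List A, u ++ v ∈ L := by
  intro u hu v
  induction v generalizing u with
  | nil => simpa using hu
  | cons a v ih =>
    have : u ++ a :: v = (u ++ [a]) ++ v := by simp
    rw [this]
    exact ih (u ++ [a]) (h u hu a)

end Aux

/-- for a left ideal L of A* (|A| ≥ 2): τ_L is a right congruence
  on A^{-ω} iff L is a two-sided ideal, iff the suffix-minimal elements of L form
  a (right) semaphore code. -/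
theorem relTau_rightCongruence_iff {A : Type*} [Fintype A] (h2 : ∃ a b : A, a ≠ b)
    (L : Set (List A)) (hL : ∀ u ∈ L, ∀ v : List A, v ++ u ∈ L) :
    (IsRightCongruence (relTau L) ↔ ∀ u ∈ L, ∀ v : List A, u ++ v ∈ L) ∧
    (IsRightCongruence (relTau L) ↔
      (IsSuffixCode (minSuffix L) ∧
        ∀ u ∈ minSuffix L, ∀ a : A, ∃ w : List A, ∃ s ∈ minSuffix L, u ++ [a] = w ++ s)) := by
  have key : IsRightCongruence (relTau L) ↔ ∀ u ∈ L, ∀ v : List A, u ++ v ∈ L := by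
    constructor
    · rintro ⟨-, hcomp⟩
      apply step_imp_twoSided
      intro u hu a
      obtain ⟨b, c, hbc⟩ := h2
      set x : ℕ → A := lapp (fun _ => b) u with hx
      set y : ℕ → A := lapp (fun _ => c) u with hy
      have hxy : relTau L x y := Or.inr ⟨u, hu, isLSuffix_lapp _ _, isLSuffix_lapp _ _⟩
      have h1 := hcomp x y a hxy
      have hxa : lapp x [a] = lapp (fun _ => b) (u ++ [a]) := (lapp_append _ _ _).symm
      have hya : lapp y [a] = lapp (fun _ => c) (u ++ [a]) := (lapp_append _ _ _).symm
      rcases h1 with heq | ⟨w, hw, hwx, hwy⟩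
      · exfalso
        have := congrFun heq ((u ++ [a]).length)
        rw [hxa, hya, lapp_at_len, lapp_at_len] at this
        exact hbc this
      · have hwlen : w.length ≤ (u ++ [a]).length := by
          by_contra hgt
          push_neg at hgt
          have hb := isLSuffix_iff.mp hwx ((u ++ [a]).length) hgt
          have hc := isLSuffix_iff.mp hwy ((u ++ [a]).length) hgt
          rw [hxa, lapp_at_len] at hb
          rw [hya, lapp_at_len] at hc
          exact hbc (hb.trans hc.symm)
        have hsuf : w <:+ u ++ [a] :=
          suffix_of_isLSuffix hwx (by rw [hxa]; exact isLSuffix_lapp _ _) hwlen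
        obtain ⟨t, ht⟩ := hsuf
        rw [← ht]
        exact hL w hw t
    · intro hT
      refine ⟨relTau_equivalence L, ?_⟩
      rintro x y a (rfl | ⟨u, hu, hx, hy⟩)
      · exact Or.inl rfl
      · refine Or.inr ⟨u ++ [a], hT u hu [a], ?_, ?_⟩
        · obtain ⟨z, rfl⟩ := hx
          rw [← lapp_append]
          exact isLSuffix_lapp _ _
        · obtain ⟨z, rfl⟩ := hy
          rw [← lapp_append]
          exact isLSuffix_lapp _ _
  have hsem : (∀ u ∈ L, ∀ v : List A, u ++ v ∈ L) ↔
      (IsSuffixCode (minSuffix L) ∧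
        ∀ u ∈ minSuffix L, ∀ a : A, ∃ w : List A, ∃ s ∈ minSuffix L, u ++ [a] = w ++ s) := by
    constructor
    · intro hT
      refine ⟨fun u hu v hv hs => hv.2 u hu.1 hs, ?_⟩
      intro u hu a
      obtain ⟨s, hs, w, hws⟩ := exists_minSuffix (hT u hu.1 [a])
      exact ⟨w, s, hs, hws.symm⟩
    · rintro ⟨-, hsem⟩
      apply step_imp_twoSided
      intro u hu a
      obtain ⟨s, hs, w, hws⟩ := exists_minSuffix hu
      obtain ⟨w', s', hs', he⟩ := hsem s hs a
      have heq : u ++ [a] = (w ++ w') ++ s' := by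
        rw [← hws, List.append_assoc, he, ← List.append_assoc]
      rw [heq]
      exact hL s' hs'.1 (w ++ w')
  exact ⟨key, key.trans hsem⟩
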